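/- arXiv:0905.4068 — 6 statements merged into one kernel-verified Lean document; each statement's English description precedes it below -/
import Mathlib

section
/- For every time step t, every oblivious schedule O_t, and every clairvoyant schedule C_t, there exists a clairvoyant schedule C*_t (for the same step t) such that every packet j occurring in C*_t with r_j ≤ t also occurs in O_t. -/
/-- Packet `j` is pending at step `t`: released by `t` and not yet expired. -/
def Pending {P : Type*} (r d : P → ℕ) (t : ℕ) (j : P) : Prop :=
  r j ≤ t ∧ t < d j

/-- Packet `j` occurs in (is scheduled by) the schedule `S`. -/
def Occurs {P : Type*} (S : ℕ → Option P) (j : P) : Prop :=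
  ∃ t', S t' = some j

/-- A feasible schedule starting at step `t` over the packet set `A`:
a partial map from steps `{t, t+1, …}` to `A`, injective on its domain,
scheduling packets only while they are pending. -/
def FeasibleSchedule {P : Type*} (r d : P → ℕ) (t : ℕ) (A : Set P)
    (S : ℕ → Option P) : Prop :=
  (∀ t' < t, S t' = none) ∧
  (∀ t₁ t₂ j, S t₁ = some j → S t₂ = some j → t₁ = t₂) ∧
  (∀ t' j, S t' = some j → j ∈ A ∧ r j ≤ t' ∧ t' < d j)

open Classical in
/-- The weight of a schedule: total weight of the scheduled packets. -/
noncomputable def schedWeight {P : Type*} [Fintype P] (w : P → ℝ)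
    (S : ℕ → Option P) : ℝ :=
  ∑ j : P, if Occurs S j then w j else 0

/-- An optimal feasible schedule starting at `t` over `A`. -/
def OptimalSchedule {P : Type*} [Fintype P] (r d : P → ℕ) (w : P → ℝ) (t : ℕ)
    (A : Set P) (S : ℕ → Option P) : Prop :=
  FeasibleSchedule r d t A S ∧
  ∀ S', FeasibleSchedule r d t A S' → schedWeight w S' ≤ schedWeight w S

/-- Compatibility of the linear order `⊴` (here `le`) with deadlines,
weights and release times. -/
def OrderCompatible {P : Type*} (r d : P → ℕ) (w : P → ℝ)
    (le : P → P → Prop) : Prop :=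
  (∀ i j, d i < d j → le i j) ∧
  (∀ i j, d i = d j → w j < w i → le i j) ∧
  (∀ i j, d i = d j → w i = w j → r i < r j → le i j)

/-- `S` is a `⊴`-schedule over `A`: whenever `S` schedules a packet, that packet is
the `⊴`-minimum of the packets of `A` pending at that step and not scheduled earlier. -/
def TriSchedule {P : Type*} (r d : P → ℕ) (le : P → P → Prop) (A : Set P)
    (S : ℕ → Option P) : Prop :=
  ∀ t' j, S t' = some j →
    ∀ k ∈ A, Pending r d t' k → (∀ u < t', S u ≠ some k) → le j k

/-- The set of packets pending at step `t`. -/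
def PendingSet {P : Type*} (r d : P → ℕ) (t : ℕ) : Set P :=
  {j | Pending r d t j}

/-- The packets pending at `t` together with all packets released after `t`. -/
def ClairSet {P : Type*} (r d : P → ℕ) (t : ℕ) : Set P :=
  {j | Pending r d t j ∨ t < r j}

/-- An oblivious schedule at step `t`: an optimal feasible `⊴`-schedule
starting at `t` over the packets pending at `t`. -/
def ObliviousSchedule {P : Type*} [Fintype P] (r d : P → ℕ) (w : P → ℝ)
    (le : P → P → Prop) (t : ℕ) (O : ℕ → Option P) : Prop :=
  OptimalSchedule r d w t (PendingSet r d t) O ∧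
  TriSchedule r d le (PendingSet r d t) O

/-- A clairvoyant schedule at step `t`: an optimal feasible schedule starting at `t`
over the packets pending at `t` together with all packets released after `t`. -/
def ClairvoyantSchedule {P : Type*} [Fintype P] (r d : P → ℕ) (w : P → ℝ)
    (t : ℕ) (C : ℕ → Option P) : Prop :=
  OptimalSchedule r d w t (ClairSet r d t) C

/-- A clairvoyant schedule `C` conforms with an oblivious schedule `O` at step `t`. -/
def Conforms {P : Type*} (r d : P → ℕ) (w : P → ℝ) (le : P → P → Prop)
    (t : ℕ) (O C : ℕ → Option P) : Prop :=
  TriSchedule r d le (ClairSet r d t) C ∧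
  (∀ j, Occurs C j → r j ≤ t → Occurs O j) ∧
  (∀ jt, C t = some jt → ∀ i, Occurs O i → le i jt → i ≠ jt → w i < w jt)

namespace Stmt0Aux

attribute [local instance 10] Classical.propDecidable

variable {P : Type*} (d : P → ℕ) (t : ℕ)

def Match (T : Set ℕ) (Z : Finset P) : Prop :=
  ∃ σ : P → ℕ, Set.InjOn σ Z ∧ ∀ x ∈ Z, σ x ∈ T ∧ t ≤ σ x ∧ σ x < d x

/-- the set of slots from `t` on that `C₀` does not use for a packet released after `t` -/
def freeSlots (C₀ : ℕ → Option P) (r : P → ℕ) : Set ℕ :=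
  {s | t ≤ s ∧ ∀ j, C₀ s = some j → r j ≤ t}

noncomputable def xi (Z : Finset P) (D : ℕ) : ℕ := (Z.filter (fun x => d x ≤ D)).card

noncomputable def tau (T : Set ℕ) (D : ℕ) : ℕ :=
  ((Finset.range D).filter (fun s => t ≤ s ∧ s ∈ T)).card


lemma hall_i {T : Set ℕ} {Z : Finset P} (h : Match d t T Z) (D : ℕ) :
    xi d Z D ≤ tau t T D := by
  obtain ⟨σ, hinj, hσ⟩ := h
  apply Finset.card_le_card_of_injOn σ
  · intro x hx
    simp only [Finset.mem_coe, Finset.mem_filter, Finset.mem_range] at hx ⊢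
    obtain ⟨hxZ, hxD⟩ := hx
    obtain ⟨h1, h2, h3⟩ := hσ x hxZ
    exact ⟨lt_of_lt_of_le h3 hxD, h2, h1⟩
  · intro a ha b hb hab
    exact hinj (Finset.mem_filter.1 ha).1 (Finset.mem_filter.1 hb).1 hab

lemma tau_univ (D : ℕ) : tau t (Set.univ : Set ℕ) D = D - t := by
  unfold tau
  refine Eq.trans (congrArg Finset.card ?_) (Nat.card_Ico t D)
  ext s
  simp [Finset.mem_range, Finset.mem_Ico, and_comm]

lemma tau_interval {T : Set ℕ} {D1 D2 : ℕ} (h : D1 ≤ D2) :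
    tau t T D2 ≤ tau t T D1 + (D2 - D1) := by
  unfold tau
  have hr : Finset.range D2 = Finset.range D1 ∪ Finset.Ico D1 D2 := by
    rw [Finset.range_eq_Ico, Finset.range_eq_Ico]
    exact (Finset.Ico_union_Ico_eq_Ico (Nat.zero_le _) h).symm
  rw [hr, Finset.filter_union]
  refine le_trans (Finset.card_union_le _ _) ?_
  exact Nat.add_le_add_left ((Finset.card_filter_le _ _).trans (by simp)) _

lemma xi_split (Z : Finset P) {D1 D2 : ℕ} (h : D1 ≤ D2) :
    xi d Z D2 = xi d Z D1 + (Z.filter (fun y => D1 < d y ∧ d y ≤ D2)).card := by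
  unfold xi
  have he : Z.filter (fun x => d x ≤ D2)
      = Z.filter (fun y => d y ≤ D1) ∪ Z.filter (fun y => D1 < d y ∧ d y ≤ D2) := by
    rw [← Finset.filter_or]
    exact Finset.filter_congr (fun y _ => by constructor <;> (intro hy; omega))
  rw [he, Finset.card_union_of_disjoint]
  rw [Finset.disjoint_filter]
  intro a _ h1 h2
  omega


lemma tau_diff_le {T : Set ℕ} {s₀ : ℕ} (D : ℕ) (hs₀T : s₀ ∈ T) :
    tau t T D ≤ tau t (T \ {s₀}) D + 1 := by
  unfold tau
  refine le_trans (Finset.card_le_card (fun s hs => ?_)) (Finset.card_insert_le s₀ _)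
  simp only [Finset.mem_insert, Finset.mem_filter, Finset.mem_range, Set.mem_diff,
    Set.mem_singleton_iff] at hs ⊢
  by_cases hss : s = s₀
  · exact Or.inl hss
  · exact Or.inr ⟨hs.1, hs.2.1, hs.2.2, hss⟩

lemma hall_ii : ∀ (n : ℕ) (T : Set ℕ) (Z : Finset P), Z.card = n →
    (∀ D, xi d Z D ≤ tau t T D) → Match d t T Z := by
  intro n
  induction n with
  | zero =>
    intro T Z hcard _
    refine ⟨fun _ => 0, ?_, ?_⟩
    · intro a ha; rw [Finset.card_eq_zero.1 hcard] at ha; simp at ha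
    · intro x hx; rw [Finset.card_eq_zero.1 hcard] at hx; simp at hx
  | succ n ih =>
    intro T Z hcard hH
    have hne : Z.Nonempty := Finset.card_pos.1 (by omega)
    obtain ⟨x₀, hx₀Z, hx₀min⟩ := Z.exists_min_image d hne
    -- find the minimum available slot below d x₀
    have hxi1 : 1 ≤ xi d Z (d x₀) := by
      unfold xi
      refine Finset.card_pos.2 ⟨x₀, ?_⟩
      simp [Finset.mem_filter, hx₀Z]
    have hS₀ : ((Finset.range (d x₀)).filter (fun s => t ≤ s ∧ s ∈ T)).Nonempty := by
      apply Finset.card_pos.1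
      have := hH (d x₀)
      unfold tau at this
      omega
    set s₀ := ((Finset.range (d x₀)).filter (fun s => t ≤ s ∧ s ∈ T)).min' hS₀ with hs₀def
    have hs₀mem := ((Finset.range (d x₀)).filter (fun s => t ≤ s ∧ s ∈ T)).min'_mem hS₀
    rw [Finset.mem_filter, Finset.mem_range] at hs₀mem
    obtain ⟨hs₀lt, hs₀t, hs₀T⟩ := hs₀mem
    -- recurse
    have hrec : Match d t (T \ {s₀}) (Z.erase x₀) := by
      apply ih
      · rw [Finset.card_erase_of_mem hx₀Z, hcard]; omega
      · intro D
        by_cases hD : d x₀ ≤ D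
        · have he1 : xi d (Z.erase x₀) D = xi d Z D - 1 := by
            unfold xi
            rw [Finset.filter_erase, Finset.card_erase_of_mem]
            simp [Finset.mem_filter, hx₀Z, hD]
          have he2 : tau t T D ≤ tau t (T \ {s₀}) D + 1 := tau_diff_le t D hs₀T
          have h3 := hH D
          have h4 : 1 ≤ xi d Z D := by
            unfold xi
            refine Finset.card_pos.2 ⟨x₀, ?_⟩
            simp [Finset.mem_filter, hx₀Z, hD]
          omega
        · have : xi d (Z.erase x₀) D = 0 := by
            unfold xi
            rw [Finset.card_eq_zero, Finset.filter_eq_empty_iff]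
            intro y hy
            have hyZ := Finset.mem_of_mem_erase hy
            have := hx₀min y hyZ
            omega
          omega
    obtain ⟨σ', hinj', hσ'⟩ := hrec
    refine ⟨Function.update σ' x₀ s₀, ?_, ?_⟩
    · intro a ha b hb hab
      by_cases hax : a = x₀ <;> by_cases hbx : b = x₀
      · rw [hax, hbx]
      · exfalso
        rw [hax, Function.update_self, Function.update_of_ne hbx] at hab
        have := (hσ' b (Finset.mem_erase.2 ⟨hbx, hb⟩)).1
        rw [← hab] at this
        exact this.2 rfl
      · exfalso
        rw [hbx, Function.update_self, Function.update_of_ne hax] at hab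
        have := (hσ' a (Finset.mem_erase.2 ⟨hax, ha⟩)).1
        rw [hab] at this
        exact this.2 rfl
      · rw [Function.update_of_ne hax, Function.update_of_ne hbx] at hab
        exact hinj' (Finset.mem_erase.2 ⟨hax, ha⟩) (Finset.mem_erase.2 ⟨hbx, hb⟩) hab
    · intro x hx
      by_cases hxx : x = x₀
      · rw [hxx, Function.update_self]
        exact ⟨hs₀T, hs₀t, hs₀lt⟩
      · rw [Function.update_of_ne hxx]
        obtain ⟨h1, h2, h3⟩ := hσ' x (Finset.mem_erase.2 ⟨hxx, hx⟩)
        exact ⟨h1.1, h2, h3⟩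

lemma match_insert {T : Set ℕ} {Z : Finset P} (hM : Match d t T Z) {x : P} (hx : x ∉ Z)
    (h : ∀ D, d x ≤ D → xi d Z D < tau t T D) : Match d t T (insert x Z) := by
  apply hall_ii d t (insert x Z).card _ _ rfl
  intro D
  have hxi : xi d (insert x Z) D ≤ xi d Z D + (if d x ≤ D then 1 else 0) := by
    unfold xi
    rw [Finset.filter_insert]
    by_cases hD : d x ≤ D
    · simp only [hD, if_pos]
      exact le_trans (Finset.card_insert_le _ _) (by omega)
    · simp [hD]
  by_cases hD : d x ≤ D
  · have := h D hD
    simp only [hD, if_pos] at hxi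
    omega
  · have := hall_i d t hM D
    simp only [hD, if_neg, not_false_iff] at hxi
    omega

lemma match_swap {T : Set ℕ} {Z : Finset P} (hM : Match d t T Z) {x b : P}
    (hx : x ∈ Z) (hb : b ∉ Z)
    (hlt : ∀ D, d b ≤ D → D < d x → xi d Z D < tau t T D) :
    Match d t T (insert b (Z.erase x)) := by
  apply hall_ii d t (insert b (Z.erase x)).card _ _ rfl
  intro D
  have hxZ : xi d Z D ≤ tau t T D := hall_i d t hM D
  have herase : xi d (Z.erase x) D ≤ xi d Z D := by
    unfold xi
    rw [Finset.filter_erase]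
    exact Finset.card_erase_le
  have herase2 : d x ≤ D → xi d (Z.erase x) D ≤ xi d Z D - 1 := by
    intro hD
    unfold xi
    rw [Finset.filter_erase, Finset.card_erase_of_mem]
    simp [Finset.mem_filter, hx, hD]
  have hins : xi d (insert b (Z.erase x)) D ≤ xi d (Z.erase x) D + (if d b ≤ D then 1 else 0) := by
    unfold xi
    rw [Finset.filter_insert]
    by_cases hD : d b ≤ D
    · simp only [hD, if_pos]
      exact le_trans (Finset.card_insert_le _ _) (by omega)
    · simp [hD]
  by_cases hDb : d b ≤ D <;> by_cases hDx : d x ≤ D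
  · have := herase2 hDx
    have h1 : 1 ≤ xi d Z D := by
      unfold xi
      refine Finset.card_pos.2 ⟨x, ?_⟩
      simp [Finset.mem_filter, hx, hDx]
    simp only [hDb, if_pos] at hins
    omega
  · have := hlt D hDb (by omega)
    simp only [hDb, if_pos] at hins
    omega
  all_goals (simp only [hDb, if_neg, not_false_iff] at hins; omega)


lemma build {r : P → ℕ} {A : Set P} {C₀ : ℕ → Option P}
    (hC₀ : FeasibleSchedule r d t A C₀)
    (Z : Finset P) (hZA : ∀ z ∈ Z, z ∈ A) (hZp : ∀ z ∈ Z, Pending r d t z)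
    (hM : Match d t (freeSlots t C₀ r) Z) :
    ∃ S : ℕ → Option P, FeasibleSchedule r d t A S ∧
      ∀ j, Occurs S j ↔ (j ∈ Z ∨ (Occurs C₀ j ∧ t < r j)) := by
  obtain ⟨σ, hinj, hσ⟩ := hM
  set S : ℕ → Option P := fun s =>
    if h : ∃ z, z ∈ Z ∧ σ z = s then some (Classical.choose h)
    else if s ∈ freeSlots t C₀ r then none else C₀ s with hSdef
  have hSz : ∀ z ∈ Z, S (σ z) = some z := by
    intro z hz
    have hex : ∃ z', z' ∈ Z ∧ σ z' = σ z := ⟨z, hz, rfl⟩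
    have : S (σ z) = some (Classical.choose hex) := by
      simp only [hSdef]
      rw [dif_pos hex]
    rw [this]
    obtain ⟨hc1, hc2⟩ := Classical.choose_spec hex
    rw [hinj hc1 hz hc2]
  have hSsome : ∀ s j, S s = some j →
      (j ∈ Z ∧ σ j = s) ∨ (C₀ s = some j ∧ t < r j ∧ s ∉ freeSlots t C₀ r) := by
    intro s j hsj
    simp only [hSdef] at hsj
    by_cases hex : ∃ z, z ∈ Z ∧ σ z = s
    · rw [dif_pos hex] at hsj
      obtain ⟨hc1, hc2⟩ := Classical.choose_spec hex
      left
      have : j = Classical.choose hex := by injection hsj.symm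
      rw [this]
      exact ⟨hc1, hc2⟩
    · rw [dif_neg hex] at hsj
      by_cases hfree : s ∈ freeSlots t C₀ r
      · rw [if_pos hfree] at hsj; exact absurd hsj (by simp)
      · rw [if_neg hfree] at hsj
        right
        refine ⟨hsj, ?_, hfree⟩
        by_contra hr
        push_neg at hr
        apply hfree
        by_cases hts : t ≤ s
        · refine ⟨hts, fun j' hj' => ?_⟩
          rw [hsj] at hj'
          obtain rfl : j = j' := by injection hj'
          exact hr
        · exact absurd (hC₀.1 s (by omega)) (by rw [hsj]; simp)
  refine ⟨S, ⟨?_, ?_, ?_⟩, ?_⟩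
  · -- nothing before t
    intro s hs
    simp only [hSdef]
    rw [dif_neg, if_neg]
    · exact hC₀.1 s hs
    · intro hfree; exact absurd hfree.1 (by omega)
    · rintro ⟨z, hz, hzs⟩
      have := (hσ z hz).2.1
      omega
  · -- injective
    intro t1 t2 j h1 h2
    rcases hSsome t1 j h1 with ⟨hj1, he1⟩ | ⟨hj1, hr1, _⟩ <;>
      rcases hSsome t2 j h2 with ⟨hj2, he2⟩ | ⟨hj2, hr2, _⟩
    · rw [← he1, ← he2]
    · exact absurd (hZp j hj1).1 (by omega)
    · exact absurd (hZp j hj2).1 (by omega)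
    · exact hC₀.2.1 t1 t2 j hj1 hj2
  · -- window constraints
    intro s j hsj
    rcases hSsome s j hsj with ⟨hj, he⟩ | ⟨hj, _, _⟩
    · obtain ⟨h1, h2, h3⟩ := hσ j hj
      have hp := hZp j hj
      exact ⟨hZA j hj, by rw [← he]; exact le_trans hp.1 h2, by rw [← he]; exact h3⟩
    · exact hC₀.2.2 s j hj
  · -- occurrence characterization
    intro j
    constructor
    · rintro ⟨s, hs⟩
      rcases hSsome s j hs with ⟨hj, _⟩ | ⟨hj, hr, _⟩
      · exact Or.inl hj
      · exact Or.inr ⟨⟨s, hj⟩, hr⟩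
    · rintro (hj | ⟨⟨s, hs⟩, hr⟩)
      · exact ⟨σ j, hSz j hj⟩
      · refine ⟨s, ?_⟩
        have hnfree : s ∉ freeSlots t C₀ r := by
          rintro ⟨-, h2⟩
          have := h2 j hs
          omega
        simp only [hSdef]
        rw [dif_neg, if_neg hnfree]
        · exact hs
        · rintro ⟨z, hz, hzs⟩
          exact hnfree (hzs ▸ (hσ z hz).1)

lemma schedWeight_eq {P : Type*} [Fintype P] (w : P → ℝ) (S : ℕ → Option P) :
    schedWeight w S = ∑ j ∈ Finset.univ.filter (fun j => Occurs S j), w j := by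
  rw [Finset.sum_filter]
  rfl


variable {P : Type*} [Fintype P]

lemma sigma_of_schedule {r d : P → ℕ} {t : ℕ} {A : Set P} {S : ℕ → Option P}
    (hS : FeasibleSchedule r d t A S) :
    Stmt0Aux.Match d t Set.univ (Finset.univ.filter (fun j => Occurs S j)) := by
  classical
  refine ⟨fun j => if h : Occurs S j then Classical.choose h else 0, ?_, ?_⟩
  · intro a ha b hb hab
    simp only [Finset.coe_filter, Set.mem_setOf_eq, Finset.mem_univ, true_and] at ha hb
    simp only [dif_pos ha, dif_pos hb] at hab
    have h1 := Classical.choose_spec ha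
    have h2 := Classical.choose_spec hb
    rw [hab] at h1
    injection h1.symm.trans h2
  · intro x hx
    simp only [Finset.mem_filter, Finset.mem_univ, true_and] at hx
    simp only [dif_pos hx]
    have hspec := Classical.choose_spec hx
    refine ⟨Set.mem_univ _, ?_, (hS.2.2 _ _ hspec).2.2⟩
    by_contra hlt
    rw [hS.1 _ (by omega)] at hspec
    exact absurd hspec (by simp)


end Stmt0Aux

/-- For every step `t`, oblivious schedule `O` and clairvoyant schedule `C`,
there is a clairvoyant schedule `C*` such that every packet occurring in `C*` that is
released by `t` also occurs in `O`. -/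
theorem stmt_0 {P : Type*} [Fintype P] (r d : P → ℕ) (w : P → ℝ)
    (le : P → P → Prop)
    (hrd : ∀ j, r j < d j) (hw : ∀ j, 0 < w j)
    (hlin : IsLinearOrder P le) (hcomp : OrderCompatible r d w le)
    (t : ℕ) (O C : ℕ → Option P)
    (hO : ObliviousSchedule r d w le t O)
    (hC : ClairvoyantSchedule r d w t C) :
    ∃ Cstar : ℕ → Option P, ClairvoyantSchedule r d w t Cstar ∧
      ∀ j, Occurs Cstar j → r j ≤ t → Occurs O j := by
  classical
  open Stmt0Aux in
  obtain ⟨⟨hOfeas, hOopt⟩, -⟩ := hO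
  obtain ⟨hCfeas, hCopt⟩ := hC
  set Pend : Finset P := Finset.univ.filter (fun j => Pending r d t j) with hPenddef
  set B : Finset P := Finset.univ.filter (fun j => Occurs O j) with hBdef
  set F : Finset P := Finset.univ.filter (fun j => Occurs C j ∧ t < r j) with hFdef
  set X : Finset P := Finset.univ.filter (fun j => Occurs C j ∧ r j ≤ t) with hXdef
  set T' : Set ℕ := Stmt0Aux.freeSlots t C r with hT'def
  set ws : Finset P → ℝ := fun Z => ∑ j ∈ Z, w j with hwsdef
  -- weight of C
  have hdisjXF : Disjoint X F := by
    rw [Finset.disjoint_left]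
    intro a ha ha'
    rw [hXdef, Finset.mem_filter] at ha
    rw [hFdef, Finset.mem_filter] at ha'
    omega
  have hwC : schedWeight w C = ws X + ws F := by
    rw [Stmt0Aux.schedWeight_eq, hwsdef]
    rw [show Finset.univ.filter (fun j => Occurs C j) = X ∪ F by
      ext j
      rw [hXdef, hFdef]
      simp only [Finset.mem_filter, Finset.mem_univ, true_and, Finset.mem_union]
      constructor
      · intro h; by_cases hr : r j ≤ t
        · exact Or.inl ⟨h, hr⟩
        · exact Or.inr ⟨h, by omega⟩
      · rintro (⟨h, -⟩ | ⟨h, -⟩) <;> exact h]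
    exact Finset.sum_union hdisjXF
  have hwO : schedWeight w O = ws B := by rw [Stmt0Aux.schedWeight_eq, hBdef]
  -- B basic facts
  have hBPend : ∀ b ∈ B, b ∈ Pend := by
    intro b hb
    rw [hBdef, Finset.mem_filter] at hb
    obtain ⟨-, s, hs⟩ := hb
    rw [hPenddef, Finset.mem_filter]
    exact ⟨Finset.mem_univ _, (hOfeas.2.2 s b hs).1⟩
  have hBmatch : Stmt0Aux.Match d t Set.univ B := Stmt0Aux.sigma_of_schedule hOfeas
  have hXmatch : Stmt0Aux.Match d t T' X := by
    refine ⟨fun j => if h : Occurs C j then Classical.choose h else 0, ?_, ?_⟩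
    · intro a ha b hb hab
      rw [hXdef] at ha hb
      simp only [Finset.coe_filter, Set.mem_setOf_eq, Finset.mem_univ, true_and] at ha hb
      simp only [dif_pos ha.1, dif_pos hb.1] at hab
      have h1 := Classical.choose_spec ha.1
      have h2 := Classical.choose_spec hb.1
      rw [hab] at h1
      injection h1.symm.trans h2
    · intro x hx
      rw [hXdef, Finset.mem_filter] at hx
      obtain ⟨-, hocc, hrx⟩ := hx
      simp only [dif_pos hocc]
      have hspec := Classical.choose_spec hocc
      have hge : t ≤ Classical.choose hocc := by
        by_contra hlt
        rw [hCfeas.1 _ (by omega)] at hspec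
        exact absurd hspec (by simp)
      refine ⟨⟨hge, ?_⟩, hge, (hCfeas.2.2 _ _ hspec).2.2⟩
      intro j' hj'
      rw [hspec] at hj'
      obtain rfl : x = j' := by injection hj'
      exact hrx
  have hXPend : ∀ j ∈ X, j ∈ Pend := by
    intro j hj
    rw [hXdef, Finset.mem_filter] at hj
    obtain ⟨-, ⟨s, hs⟩, hrj⟩ := hj
    rw [hPenddef, Finset.mem_filter]
    have hts : t ≤ s := by
      by_contra hlt
      rw [hCfeas.1 _ (by omega)] at hs
      exact absurd hs (by simp)
    exact ⟨Finset.mem_univ _, hrj, lt_of_le_of_lt hts (hCfeas.2.2 s j hs).2.2⟩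
  -- building schedules from matchable pending sets
  have genPend : ∀ Z : Finset P, (∀ z ∈ Z, z ∈ Pend) →
      Stmt0Aux.Match d t Set.univ Z →
      ∃ S, FeasibleSchedule r d t (PendingSet r d t) S ∧ schedWeight w S = ws Z := by
    intro Z hZP hM
    have hpend : ∀ z ∈ Z, Pending r d t z := by
      intro z hz
      have := hZP z hz
      rw [hPenddef, Finset.mem_filter] at this
      exact this.2
    have hfeas0 : FeasibleSchedule r d t (PendingSet r d t) (fun _ => none) :=
      ⟨fun _ _ => rfl, by intro a b c h; exact absurd h (by simp),
       by intro a b h; exact absurd h (by simp)⟩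
    have hM' : Stmt0Aux.Match d t (Stmt0Aux.freeSlots t (fun _ => (none : Option P)) r) Z := by
      obtain ⟨σ, h1, h2⟩ := hM
      exact ⟨σ, h1, fun x hx => ⟨⟨(h2 x hx).2.1, fun j hj => absurd hj (by simp)⟩,
        (h2 x hx).2.1, (h2 x hx).2.2⟩⟩
    obtain ⟨S, hS1, hS2⟩ := Stmt0Aux.build d t hfeas0 Z (fun z hz => hpend z hz) hpend hM'
    refine ⟨S, hS1, ?_⟩
    rw [Stmt0Aux.schedWeight_eq, hwsdef]
    congr 1
    ext j
    simp only [Finset.mem_filter, Finset.mem_univ, true_and]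
    rw [hS2 j]
    simp [Occurs]
  have genClair : ∀ Z : Finset P, (∀ z ∈ Z, z ∈ Pend) →
      Stmt0Aux.Match d t T' Z →
      ∃ S, FeasibleSchedule r d t (ClairSet r d t) S ∧
        (∀ j, Occurs S j ↔ (j ∈ Z ∨ (Occurs C j ∧ t < r j))) ∧
        schedWeight w S = ws Z + ws F := by
    intro Z hZP hM
    have hpend : ∀ z ∈ Z, Pending r d t z := by
      intro z hz
      have := hZP z hz
      rw [hPenddef, Finset.mem_filter] at this
      exact this.2
    obtain ⟨S, hS1, hS2⟩ := Stmt0Aux.build d t hCfeas Z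
      (fun z hz => Or.inl (hpend z hz)) hpend hM
    refine ⟨S, hS1, hS2, ?_⟩
    have hdisjZF : Disjoint Z F := by
      rw [Finset.disjoint_left]
      intro a ha ha'
      rw [hFdef, Finset.mem_filter] at ha'
      exact absurd (hpend a ha).1 (by omega)
    rw [Stmt0Aux.schedWeight_eq, hwsdef]
    rw [show Finset.univ.filter (fun j => Occurs S j) = Z ∪ F by
      ext j
      simp only [Finset.mem_filter, Finset.mem_univ, true_and, Finset.mem_union]
      rw [hS2 j, hFdef]
      simp only [Finset.mem_filter, Finset.mem_univ, true_and]]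
    exact Finset.sum_union hdisjZF
  -- O-optimality consequences
  have hOmaximal : ∀ x ∈ Pend, x ∉ B → ¬ Stmt0Aux.Match d t Set.univ (insert x B) := by
    intro x hxP hxB hM
    obtain ⟨S, hS1, hS2⟩ := genPend (insert x B) (by
      intro z hz
      rcases Finset.mem_insert.1 hz with rfl | hz'
      · exact hxP
      · exact hBPend z hz') hM
    have hle := hOopt S hS1
    rw [hwO, hS2, hwsdef] at hle
    beta_reduce at hle
    rw [Finset.sum_insert hxB] at hle
    have := hw x
    linarith
  have hOexch : ∀ x ∈ Pend, x ∉ B → ∀ i ∈ B,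
      Stmt0Aux.Match d t Set.univ (insert x (B.erase i)) → w x ≤ w i := by
    intro x hxP hxB i hiB hM
    obtain ⟨S, hS1, hS2⟩ := genPend (insert x (B.erase i)) (by
      intro z hz
      rcases Finset.mem_insert.1 hz with rfl | hz'
      · exact hxP
      · exact hBPend z (Finset.mem_of_mem_erase hz')) hM
    have hle := hOopt S hS1
    rw [hwO, hS2, hwsdef] at hle
    beta_reduce at hle
    rw [Finset.sum_insert (fun hc => hxB (Finset.mem_of_mem_erase hc)),
      Finset.sum_erase_eq_sub hiB] at hle
    linarith
  -- C-optimality consequence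
  have hCmax : ∀ Z : Finset P, (∀ z ∈ Z, z ∈ Pend) → Stmt0Aux.Match d t T' Z →
      ws Z ≤ ws X := by
    intro Z hZP hM
    obtain ⟨S, hS1, -, hS3⟩ := genClair Z hZP hM
    have hle := hCopt S hS1
    rw [hwC, hS3] at hle
    linarith
  -- extremal choice of Y
  set Good : Finset P → Prop := fun Z => (∀ z ∈ Z, z ∈ Pend) ∧ Stmt0Aux.Match d t T' Z
    with hGooddef
  set 𝒮 : Finset (Finset P) := Finset.univ.filter Good with h𝒮def
  have hX𝒮 : X ∈ 𝒮 := by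
    rw [h𝒮def, Finset.mem_filter]
    exact ⟨Finset.mem_univ _, hXPend, hXmatch⟩
  obtain ⟨Y₀, hY₀S, hY₀max⟩ := Finset.exists_max_image 𝒮 ws ⟨X, hX𝒮⟩
  set 𝒮2 : Finset (Finset P) := 𝒮.filter (fun Z => ws Y₀ ≤ ws Z) with h𝒮2def
  obtain ⟨Y, hYS2, hYmax2⟩ := Finset.exists_max_image 𝒮2 (fun Z => (Z ∩ B).card)
    ⟨Y₀, by rw [h𝒮2def, Finset.mem_filter]; exact ⟨hY₀S, le_refl _⟩⟩
  rw [h𝒮2def, Finset.mem_filter] at hYS2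
  obtain ⟨hYS, hYw⟩ := hYS2
  have hYGood : Good Y := by
    rw [h𝒮def, Finset.mem_filter] at hYS
    exact hYS.2
  have hwXY : ws X ≤ ws Y := le_trans (hY₀max X hX𝒮) hYw
  -- main claim : Y ⊆ B
  have hYB : ∀ y ∈ Y, y ∈ B := by
    by_contra hcon
    push_neg at hcon
    obtain ⟨x, hxY, hxB⟩ := hcon
    have hxPend := hYGood.1 x hxY
    have hxp : Pending r d t x := by
      rw [hPenddef, Finset.mem_filter] at hxPend
      exact hxPend.2
    -- tight deadline for B
    have hex : ∃ D, d x ≤ D ∧ Stmt0Aux.xi d B D = Stmt0Aux.tau t Set.univ D := by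
      by_contra hno
      push_neg at hno
      refine hOmaximal x hxPend hxB (Stmt0Aux.match_insert d t hBmatch hxB ?_)
      intro D hD
      exact lt_of_le_of_ne (Stmt0Aux.hall_i d t hBmatch D) (hno D hD)
    set Dst := Nat.find hex with hDstdef
    obtain ⟨hDst1'', hDst2''⟩ := Nat.find_spec hex
    have hDst1 : d x ≤ Dst := hDst1''
    have hDst2 : Stmt0Aux.xi d B Dst = Stmt0Aux.tau t Set.univ Dst := hDst2''
    have hDmin : ∀ D, d x ≤ D → D < Dst → Stmt0Aux.xi d B D < Stmt0Aux.tau t Set.univ D := by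
      intro D h1 h2
      exact lt_of_le_of_ne (Stmt0Aux.hall_i d t hBmatch D)
        (fun he => Nat.find_min hex h2 ⟨h1, he⟩)
    -- last tight deadline for Y below d x
    set Efin : Finset ℕ :=
      (Finset.range (d x)).filter (fun D => Stmt0Aux.xi d Y D = Stmt0Aux.tau t T' D)
      with hEdef
    have htE : t ∈ Efin := by
      rw [hEdef, Finset.mem_filter, Finset.mem_range]
      refine ⟨hxp.2, ?_⟩
      have h1 : Stmt0Aux.xi d Y t = 0 := by
        rw [Stmt0Aux.xi, Finset.card_eq_zero, Finset.filter_eq_empty_iff]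
        intro y hy
        have := hYGood.1 y hy
        rw [hPenddef, Finset.mem_filter] at this
        have := this.2.2
        omega
      have h2 : Stmt0Aux.tau t T' t = 0 := by
        rw [Stmt0Aux.tau, Finset.card_eq_zero, Finset.filter_eq_empty_iff]
        intro s hs
        rw [Finset.mem_range] at hs
        intro hc
        omega
      rw [h1, h2]
    have hEne : Efin.Nonempty := ⟨t, htE⟩
    set e := Efin.max' hEne with hedef
    have heE := Efin.max'_mem hEne
    obtain ⟨hedx', heq⟩ := Finset.mem_filter.1 heE
    have hedx : e < d x := Finset.mem_range.1 hedx'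
    have heq2 : Stmt0Aux.xi d Y e = Stmt0Aux.tau t T' e := heq
    have hte : t ≤ e := Finset.le_max' Efin t htE
    have hemax : ∀ D, e < D → D < d x → Stmt0Aux.xi d Y D < Stmt0Aux.tau t T' D := by
      intro D h1 h2
      refine lt_of_le_of_ne (Stmt0Aux.hall_i d t hYGood.2 D) (fun hEq => ?_)
      have : D ≤ e := Finset.le_max' Efin D (by
        rw [hEdef, Finset.mem_filter, Finset.mem_range]; exact ⟨h2, hEq⟩)
      omega
    -- Claim 1 : every b in B with e < d b ≤ Dst lies in Y
    have hclaim : ∀ b ∈ B, e < d b → d b ≤ Dst → b ∈ Y := by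
      intro b hbB hb1 hb2
      by_contra hbY
      have hwxb : w x ≤ w b := by
        refine hOexch x hxPend hxB b hbB (Stmt0Aux.match_swap d t hBmatch hbB hxB ?_)
        intro D h1 h2
        exact hDmin D h1 (lt_of_lt_of_le h2 hb2)
      have hY' : Stmt0Aux.Match d t T' (insert b (Y.erase x)) := by
        refine Stmt0Aux.match_swap d t hYGood.2 hxY hbY ?_
        intro D h1 h2
        exact hemax D (by omega) h2
      have hY'Pend : ∀ z ∈ insert b (Y.erase x), z ∈ Pend := by
        intro z hz
        rcases Finset.mem_insert.1 hz with rfl | hz'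
        · exact hBPend z hbB
        · exact hYGood.1 z (Finset.mem_of_mem_erase hz')
      have hbYe : b ∉ Y.erase x := fun hc => hbY (Finset.mem_of_mem_erase hc)
      have hwsY' : ws Y ≤ ws (insert b (Y.erase x)) := by
        rw [hwsdef]
        beta_reduce
        rw [Finset.sum_insert hbYe, Finset.sum_erase_eq_sub hxY]
        linarith
      have hY'S2 : insert b (Y.erase x) ∈ 𝒮2 := by
        rw [h𝒮2def, Finset.mem_filter, h𝒮def, Finset.mem_filter]
        exact ⟨⟨Finset.mem_univ _, hY'Pend, hY'⟩, le_trans hYw hwsY'⟩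
      have hcard := hYmax2 _ hY'S2
      have hxYB : x ∉ Y ∩ B := fun hc => hxB (Finset.mem_inter.1 hc).2
      have hbYB : b ∉ Y ∩ B := fun hc => hbY (Finset.mem_inter.1 hc).1
      have hinter : (insert b (Y.erase x)) ∩ B = insert b (Y ∩ B) := by
        rw [Finset.insert_inter_of_mem hbB, Finset.erase_inter,
          Finset.erase_eq_of_notMem hxYB]
      beta_reduce at hcard
      rw [hinter, Finset.card_insert_of_notMem hbYB] at hcard
      omega
    -- counting contradiction
    have hteDst : e ≤ Dst := by omega
    have h1 := Stmt0Aux.xi_split d Y hteDst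
    have h2 := Stmt0Aux.xi_split d B hteDst
    have hsubins : insert x (B.filter (fun y => e < d y ∧ d y ≤ Dst)) ⊆
        Y.filter (fun y => e < d y ∧ d y ≤ Dst) := by
      intro a ha
      rcases Finset.mem_insert.1 ha with rfl | ha'
      · rw [Finset.mem_filter]
        exact ⟨hxY, hedx, hDst1⟩
      · rw [Finset.mem_filter] at ha' ⊢
        exact ⟨hclaim a ha'.1 ha'.2.1 ha'.2.2, ha'.2⟩
    have hxnot : x ∉ B.filter (fun y => e < d y ∧ d y ≤ Dst) := by
      rw [Finset.mem_filter]
      exact fun hc => hxB hc.1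
    have hcard2 : (B.filter (fun y => e < d y ∧ d y ≤ Dst)).card + 1 ≤
        (Y.filter (fun y => e < d y ∧ d y ≤ Dst)).card := by
      rw [← Finset.card_insert_of_notMem hxnot]
      exact Finset.card_le_card hsubins
    have hBe : Stmt0Aux.xi d B e ≤ e - t := by
      have := Stmt0Aux.hall_i d t hBmatch e
      rwa [Stmt0Aux.tau_univ] at this
    have hBtight : Stmt0Aux.xi d B Dst = Dst - t := by
      rw [hDst2, Stmt0Aux.tau_univ]
    have hYDst : Stmt0Aux.xi d Y Dst ≤ Stmt0Aux.tau t T' Dst :=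
      Stmt0Aux.hall_i d t hYGood.2 Dst
    have htauint : Stmt0Aux.tau t T' Dst ≤ Stmt0Aux.tau t T' e + (Dst - e) :=
      Stmt0Aux.tau_interval t hteDst
    omega
  -- conclusion
  obtain ⟨Cstar, hCs1, hCs2, hCs3⟩ := genClair Y hYGood.1 hYGood.2
  have hwCs : schedWeight w C ≤ schedWeight w Cstar := by
    rw [hwC, hCs3]
    linarith
  refine ⟨Cstar, ⟨hCs1, fun S' hS' => le_trans (hCopt S' hS') hwCs⟩, ?_⟩
  intro j hj hjr
  rcases (hCs2 j).1 hj with hjY | ⟨-, hjt⟩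
  · have := hYB j hjY
    rw [hBdef, Finset.mem_filter] at this
    exact this.2
  · omega
end

section
/- Let O be an optimal feasible ⊴-schedule starting at step t over the set of packets pending at t, and let C be an optimal feasible schedule starting at t over the packets pending at t together with all packets released after t. If a packet j with r_j ≤ t occurs in C but not in O, then there exists a packet j' occurring in O but not in C with w_{j'} = w_j such that the packet set (C \ {j}) ∪ {j'} admits a feasible schedule starting at t whose weight equals the weight of C. -/
open Classical in
lemma schedWeight_swap' {P : Type*} [Fintype P] (w : P → ℝ) (S S' : ℕ → Option P) (a b : P)
    (hab : a ≠ b) (ha : Occurs S' a) (hb : ¬ Occurs S' b)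
    (hocc : ∀ k, Occurs S k ↔ (Occurs S' k ∧ k ≠ a) ∨ k = b) :
    schedWeight w S + w a = schedWeight w S' + w b := by
  classical
  have key : ∀ k ∈ (Finset.univ : Finset P),
      ((if Occurs S k then w k else 0) + (if k = a then w k else 0))
      = ((if Occurs S' k then w k else 0) + (if k = b then w k else 0)) := by
    intro k _
    by_cases hka : k = a
    · subst hka
      have h1 : ¬ Occurs S k := by rw [hocc]; simp [hab]
      simp [h1, ha, hab]
    · by_cases hkb : k = b
      · subst hkb
        have h1 : Occurs S k := by rw [hocc]; simp
        simp [h1, hb, hka]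
      · have h1 : Occurs S k ↔ Occurs S' k := by rw [hocc]; simp [hka, hkb]
        by_cases h2 : Occurs S' k <;> simp [h1, h2, hka, hkb]
  have := Finset.sum_congr rfl key
  rw [Finset.sum_add_distrib, Finset.sum_add_distrib, Finset.sum_ite_eq' Finset.univ a w,
    Finset.sum_ite_eq' Finset.univ b w] at this
  simpa [schedWeight] using this

open Classical in
lemma schedWeight_add' {P : Type*} [Fintype P] (w : P → ℝ) (S S' : ℕ → Option P) (b : P)
    (hb : ¬ Occurs S' b)
    (hocc : ∀ k, Occurs S k ↔ Occurs S' k ∨ k = b) :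
    schedWeight w S = schedWeight w S' + w b := by
  classical
  have key : ∀ k ∈ (Finset.univ : Finset P),
      (if Occurs S k then w k else 0)
      = ((if Occurs S' k then w k else 0) + (if k = b then w k else 0)) := by
    intro k _
    by_cases hkb : k = b
    · subst hkb
      have h1 : Occurs S k := by rw [hocc]; simp
      simp [h1, hb]
    · have h1 : Occurs S k ↔ Occurs S' k := by rw [hocc]; simp [hkb]
      by_cases h2 : Occurs S' k <;> simp [h1, h2, hkb]
  have := Finset.sum_congr rfl key
  rw [Finset.sum_add_distrib, Finset.sum_ite_eq' Finset.univ b w] at this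
  simpa [schedWeight] using this

/-- If a packet `j` released by `t` occurs in the clairvoyant schedule `C`
but not in the oblivious schedule `O`, there is a packet `j'` in `O` but not in `C`
of the same weight such that the packet set `(C \ {j}) ∪ {j'}` admits a feasible
schedule starting at `t` whose weight equals the weight of `C`. -/
theorem stmt_1 {P : Type*} [Fintype P] (r d : P → ℕ) (w : P → ℝ)
    (le : P → P → Prop)
    (hrd : ∀ j, r j < d j) (hw : ∀ j, 0 < w j)
    (hlin : IsLinearOrder P le) (hcomp : OrderCompatible r d w le)
    (t : ℕ) (O C : ℕ → Option P)
    (hO : OptimalSchedule r d w t (PendingSet r d t) O)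
    (hOtri : TriSchedule r d le (PendingSet r d t) O)
    (hC : OptimalSchedule r d w t (ClairSet r d t) C)
    (j : P) (hjr : r j ≤ t) (hjC : Occurs C j) (hjO : ¬ Occurs O j) :
    ∃ j', Occurs O j' ∧ ¬ Occurs C j' ∧ w j' = w j ∧
      ∃ S : ℕ → Option P,
        FeasibleSchedule r d t (({k | Occurs C k} \ {j}) ∪ {j'}) S ∧
        (∀ k, k ∈ (({k | Occurs C k} \ {j}) ∪ {j'} : Set P) → Occurs S k) ∧
        schedWeight w S = schedWeight w C := by
  classical
  obtain ⟨tj, hCtj⟩ := id hjC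
  have htj1 : t ≤ tj := by
    by_contra h
    rw [hC.1.1 tj (by omega)] at hCtj
    exact nomatch hCtj
  have htj2 : tj < d j := (hC.1.2.2 tj j hCtj).2.2
  have hjpend : j ∈ PendingSet r d t := ⟨hjr, lt_of_le_of_lt htj1 htj2⟩
  have hOnotj : ∀ u, O u ≠ some j := fun u hu => hjO ⟨u, hu⟩
  -- Lemma A : O is defined on every slot of [t, d j)
  have hA : ∀ s, t ≤ s → s < d j → ∃ p, O s = some p := by
    intro s hs1 hs2
    cases hOs : O s with
    | some p => exact ⟨p, rfl⟩
    | none =>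
      exfalso
      set O' : ℕ → Option P := fun u => if u = s then some j else O u with hO'def
      have hO'occ : ∀ k, Occurs O' k ↔ Occurs O k ∨ k = j := by
        intro k
        constructor
        · rintro ⟨u, hu⟩
          simp only [hO'def] at hu
          split_ifs at hu with h
          · exact Or.inr (Option.some.inj hu).symm
          · exact Or.inl ⟨u, hu⟩
        · rintro (⟨u, hu⟩ | rfl)
          · have hus : u ≠ s := fun h => by rw [h, hOs] at hu; exact nomatch hu
            exact ⟨u, by simp only [hO'def, if_neg hus]; exact hu⟩
          · exact ⟨s, by simp only [hO'def, if_pos rfl]⟩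
      have hfeas : FeasibleSchedule r d t (PendingSet r d t) O' := by
        refine ⟨?_, ?_, ?_⟩
        · intro u hu
          have hus : u ≠ s := by omega
          simp only [hO'def, if_neg hus]
          exact hO.1.1 u hu
        · intro a b k ha hb
          simp only [hO'def] at ha hb
          split_ifs at ha hb with h1 h2 h2
          · omega
          · exact absurd hb (by rw [← Option.some.inj ha]; exact hOnotj b)
          · exact absurd ha (by rw [← Option.some.inj hb]; exact hOnotj a)
          · exact hO.1.2.1 a b k ha hb
        · intro u k hk
          simp only [hO'def] at hk
          split_ifs at hk with h
          · subst h
            rw [← Option.some.inj hk]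
            exact ⟨hjpend, le_trans hjr hs1, hs2⟩
          · exact hO.1.2.2 u k hk
      have hwt : schedWeight w O' = schedWeight w O + w j :=
        schedWeight_add' w O' O j hjO hO'occ
      have hle := hO.2 O' hfeas
      have := hw j
      linarith
  -- Lemma B : packets scheduled by O in [t, d j) have deadline ≤ d j
  have hB : ∀ s p, t ≤ s → s < d j → O s = some p → d p ≤ d j := by
    intro s p hs1 hs2 hOs
    by_contra hdp
    push_neg at hdp
    have h1 : le p j := hOtri s p hOs j hjpend ⟨le_trans hjr hs1, hs2⟩ (fun u _ => hOnotj u)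
    have h2 : le j p := hcomp.1 j p hdp
    haveI : IsAntisymm P le := by haveI := hlin; infer_instance
    have : p = j := antisymm h1 h2
    exact hjO ⟨s, this ▸ hOs⟩
  -- Main alternating-path induction
  have AUX : ∀ (fuel : ℕ) (V : Finset ℕ) (sf : ℕ) (pc : P) (S T : ℕ → Option P),
      d j - t ≤ V.card + fuel →
      (∀ v ∈ V, t ≤ v ∧ v < d j) →
      sf ∉ V → t ≤ sf → sf < d j →
      S sf = none →
      O sf = some pc →
      FeasibleSchedule r d t (ClairSet r d t) S →
      (∀ k, Occurs S k ↔ Occurs C k ∧ k ≠ j) →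
      FeasibleSchedule r d t (PendingSet r d t) T →
      (∀ k, Occurs T k ↔ (Occurs O k ∧ k ≠ pc) ∨ k = j) →
      (∀ s, s ∉ V → s ≠ sf → T s = O s) →
      (∀ v ∈ V, ∃ q, O v = some q ∧ S v = some q) →
      ∃ j', Occurs O j' ∧ ¬ Occurs C j' ∧ w j' = w j ∧
        ∃ S : ℕ → Option P,
          FeasibleSchedule r d t (({k | Occurs C k} \ {j}) ∪ {j'}) S ∧
          (∀ k, k ∈ (({k | Occurs C k} \ {j}) ∪ {j'} : Set P) → Occurs S k) ∧
          schedWeight w S = schedWeight w C := by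
    intro fuel
    induction fuel with
    | zero =>
      intro V sf pc S T hcard hV hsfV hsf1 hsf2 _ _ _ _ _ _ _ _
      exfalso
      have hsub : insert sf V ⊆ Finset.Ico t (d j) := by
        intro v hv
        rcases Finset.mem_insert.1 hv with rfl | h
        · exact Finset.mem_Ico.2 ⟨hsf1, hsf2⟩
        · exact Finset.mem_Ico.2 ⟨(hV v h).1, (hV v h).2⟩
      have hcc := Finset.card_le_card hsub
      rw [Finset.card_insert_of_notMem hsfV, Nat.card_Ico] at hcc
      omega
    | succ n ih =>
      intro V sf pc S T hcard hV hsfV hsf1 hsf2 hSsf hOsf hS hSocc hT hTocc hTO hI9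
      have hpcO : Occurs O pc := ⟨sf, hOsf⟩
      have hpcj : pc ≠ j := fun h => hjO (h ▸ hpcO)
      have hpcPend : pc ∈ PendingSet r d t := (hO.1.2.2 sf pc hOsf).1
      have hpcsf : r pc ≤ sf ∧ sf < d pc := (hO.1.2.2 sf pc hOsf).2
      by_cases hpcC : Occurs C pc
      · -- step case: pc occurs in C (hence in S); extend the path
        obtain ⟨s', hs'⟩ : Occurs S pc := (hSocc pc).2 ⟨hpcC, hpcj⟩
        have hs'sf : s' ≠ sf := fun h => by rw [h, hSsf] at hs'; exact nomatch hs'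
        have hs'V : s' ∉ V := by
          intro hmem
          obtain ⟨q, hq1, hq2⟩ := hI9 s' hmem
          rw [hs'] at hq2
          have hqpc : q = pc := (Option.some.inj hq2).symm
          rw [hqpc] at hq1
          exact hs'sf (hO.1.2.1 s' sf pc hq1 hOsf)
        have hs't : t ≤ s' := by
          by_contra h
          rw [hS.1 s' (by omega)] at hs'
          exact nomatch hs'
        have hs'd : s' < d pc := (hS.2.2 s' pc hs').2.2
        have hs'dj : s' < d j := lt_of_lt_of_le hs'd (hB sf pc hsf1 hsf2 hOsf)
        obtain ⟨p', hp'⟩ := hA s' hs't hs'dj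
        have hp'pc : p' ≠ pc := fun h =>
          hs'sf (hO.1.2.1 s' sf pc (h ▸ hp') hOsf)
        have hTs' : T s' = O s' := hTO s' hs'V hs'sf
        set S' : ℕ → Option P := fun s => if s = s' then none else if s = sf then some pc else S s with hS'def
        set T' : ℕ → Option P := fun s => if s = s' then some pc else T s with hT'def
        have hS'char : ∀ u k, S' u = some k →
            u ≠ s' ∧ ((u = sf ∧ k = pc) ∨ (u ≠ sf ∧ S u = some k)) := by
          intro u k hu
          simp only [hS'def] at hu
          by_cases g1 : u = s'
          · rw [if_pos g1] at hu; exact nomatch hu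
          · rw [if_neg g1] at hu
            by_cases g2 : u = sf
            · rw [if_pos g2] at hu
              exact ⟨g1, Or.inl ⟨g2, (Option.some.inj hu).symm⟩⟩
            · rw [if_neg g2] at hu
              exact ⟨g1, Or.inr ⟨g2, hu⟩⟩
        have hT'char : ∀ u k, T' u = some k →
            (u = s' ∧ k = pc) ∨ (u ≠ s' ∧ T u = some k) := by
          intro u k hu
          simp only [hT'def] at hu
          by_cases g1 : u = s'
          · rw [if_pos g1] at hu
            exact Or.inl ⟨g1, (Option.some.inj hu).symm⟩
          · rw [if_neg g1] at hu
            exact Or.inr ⟨g1, hu⟩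
        have hS'feas : FeasibleSchedule r d t (ClairSet r d t) S' := by
          refine ⟨?_, ?_, ?_⟩
          · intro u hu
            have h1 : u ≠ s' := by omega
            have h2 : u ≠ sf := by omega
            simp only [hS'def, if_neg h1, if_neg h2]
            exact hS.1 u hu
          · intro a b k ha hb
            obtain ⟨ha1, ha2⟩ := hS'char a k ha
            obtain ⟨hb1, hb2⟩ := hS'char b k hb
            rcases ha2 with ⟨ga, hk⟩ | ⟨ga, hSa⟩
            · rcases hb2 with ⟨gb, _⟩ | ⟨gb, hSb⟩
              · rw [ga, gb]
              · rw [hk] at hSb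
                exact absurd (hS.2.1 b s' pc hSb hs') hb1
            · rcases hb2 with ⟨gb, hk⟩ | ⟨gb, hSb⟩
              · rw [hk] at hSa
                exact absurd (hS.2.1 a s' pc hSa hs') ha1
              · exact hS.2.1 a b k hSa hSb
          · intro u k hk
            obtain ⟨h1, h2⟩ := hS'char u k hk
            rcases h2 with ⟨g, rfl⟩ | ⟨g, hSu⟩
            · rw [g]
              exact ⟨Or.inl hpcPend, hpcsf⟩
            · exact hS.2.2 u k hSu
        have hS'occ : ∀ k, Occurs S' k ↔ Occurs C k ∧ k ≠ j := by
          intro k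
          rw [← hSocc k]
          constructor
          · rintro ⟨u, hu⟩
            obtain ⟨h1, h2⟩ := hS'char u k hu
            rcases h2 with ⟨g, rfl⟩ | ⟨g, hSu⟩
            · exact ⟨s', hs'⟩
            · exact ⟨u, hSu⟩
          · rintro ⟨u, hu⟩
            by_cases g1 : u = s'
            · subst g1
              have hk : k = pc := by rw [hs'] at hu; exact (Option.some.inj hu).symm
              refine ⟨sf, ?_⟩
              rw [hk]
              simp [hS'def, Ne.symm hs'sf]
            · have g2 : u ≠ sf := fun h => by rw [h, hSsf] at hu; exact nomatch hu
              exact ⟨u, by simp only [hS'def, if_neg g1, if_neg g2]; exact hu⟩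
        have hT'feas : FeasibleSchedule r d t (PendingSet r d t) T' := by
          refine ⟨?_, ?_, ?_⟩
          · intro u hu
            have g1 : u ≠ s' := by omega
            simp only [hT'def, if_neg g1]
            exact hT.1 u hu
          · intro a b k ha hb
            rcases hT'char a k ha with ⟨ga, hk⟩ | ⟨ga, hTa⟩
            · rcases hT'char b k hb with ⟨gb, _⟩ | ⟨gb, hTb⟩
              · rw [ga, gb]
              · exfalso
                rw [hk] at hTb
                rcases (hTocc pc).1 ⟨b, hTb⟩ with ⟨_, h2⟩ | h3
                · exact h2 rfl
                · exact hpcj h3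
            · rcases hT'char b k hb with ⟨gb, hk⟩ | ⟨gb, hTb⟩
              · exfalso
                rw [hk] at hTa
                rcases (hTocc pc).1 ⟨a, hTa⟩ with ⟨_, h2⟩ | h3
                · exact h2 rfl
                · exact hpcj h3
              · exact hT.2.1 a b k hTa hTb
          · intro u k hk
            rcases hT'char u k hk with ⟨g, hk2⟩ | ⟨g, hTu⟩
            · rw [g, hk2]
              exact ⟨hpcPend, (hS.2.2 s' pc hs').2⟩
            · exact hT.2.2 u k hTu
        have hT'occ : ∀ k, Occurs T' k ↔ (Occurs O k ∧ k ≠ p') ∨ k = j := by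
          intro k
          constructor
          · rintro ⟨u, hu⟩
            rcases hT'char u k hu with ⟨g, rfl⟩ | ⟨g, hTu⟩
            · exact Or.inl ⟨hpcO, Ne.symm hp'pc⟩
            · rcases (hTocc k).1 ⟨u, hTu⟩ with ⟨h1, h2⟩ | h3
              · refine Or.inl ⟨h1, ?_⟩
                intro hkp'
                subst hkp'
                exact g (hT.2.1 u s' k hTu (hTs'.trans hp'))
              · exact Or.inr h3
          · rintro (⟨h1, h2⟩ | hkj)
            · by_cases hkpc : k = pc
              · refine ⟨s', ?_⟩
                rw [hkpc]
                simp [hT'def]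
              · obtain ⟨u, hu⟩ := (hTocc k).2 (Or.inl ⟨h1, hkpc⟩)
                have hus' : u ≠ s' := by
                  intro h
                  rw [h, hTs', hp'] at hu
                  exact h2 (Option.some.inj hu).symm
                exact ⟨u, by simp only [hT'def, if_neg hus']; exact hu⟩
            · rw [hkj]
              obtain ⟨u, hu⟩ := (hTocc j).2 (Or.inr rfl)
              have hus' : u ≠ s' := by
                intro h
                rw [h, hTs', hp'] at hu
                have hp'j : p' = j := Option.some.inj hu
                exact hjO ⟨s', hp'j ▸ hp'⟩
              exact ⟨u, by simp only [hT'def, if_neg hus']; exact hu⟩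
        have hT'O : ∀ s, s ∉ insert sf V → s ≠ s' → T' s = O s := by
          intro s hs1 hs2
          simp only [hT'def, if_neg hs2]
          exact hTO s (fun h => hs1 (Finset.mem_insert_of_mem h))
            (fun h => hs1 (h ▸ Finset.mem_insert_self sf V))
        have hI9' : ∀ v ∈ insert sf V, ∃ q, O v = some q ∧ S' v = some q := by
          intro v hv
          rcases Finset.mem_insert.1 hv with rfl | hv'
          · exact ⟨pc, hOsf, by simp [hS'def, Ne.symm hs'sf]⟩
          · obtain ⟨q, h1, h2⟩ := hI9 v hv'
            have hv1 : v ≠ s' := fun h => hs'V (h ▸ hv')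
            have hv2 : v ≠ sf := fun h => hsfV (h ▸ hv')
            exact ⟨q, h1, by simp only [hS'def, if_neg hv1, if_neg hv2]; exact h2⟩
        refine ih (insert sf V) s' p' S' T' ?_ ?_ ?_ hs't hs'dj
          (by simp only [hS'def, if_pos rfl]) hp' hS'feas hS'occ hT'feas hT'occ hT'O hI9'
        · rw [Finset.card_insert_of_notMem hsfV]; omega
        · intro v hv
          rcases Finset.mem_insert.1 hv with rfl | h
          · exact ⟨hsf1, hsf2⟩
          · exact hV v h
        · intro h
          rcases Finset.mem_insert.1 h with h1 | h1
          · exact hs'sf h1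
          · exact hs'V h1
      · -- termination: pc does not occur in C
        set S₂ : ℕ → Option P := fun s => if s = sf then some pc else S s with hS2def
        have hS2char : ∀ u k, S₂ u = some k →
            (u = sf ∧ k = pc) ∨ (u ≠ sf ∧ S u = some k) := by
          intro u k hu
          simp only [hS2def] at hu
          by_cases g1 : u = sf
          · rw [if_pos g1] at hu
            exact Or.inl ⟨g1, (Option.some.inj hu).symm⟩
          · rw [if_neg g1] at hu
            exact Or.inr ⟨g1, hu⟩
        have hS2occ : ∀ k, Occurs S₂ k ↔ (Occurs C k ∧ k ≠ j) ∨ k = pc := by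
          intro k
          constructor
          · rintro ⟨u, hu⟩
            rcases hS2char u k hu with ⟨g, rfl⟩ | ⟨g, hSu⟩
            · exact Or.inr rfl
            · exact Or.inl ((hSocc k).1 ⟨u, hSu⟩)
          · rintro (⟨h1, h2⟩ | rfl)
            · obtain ⟨u, hu⟩ := (hSocc k).2 ⟨h1, h2⟩
              have g : u ≠ sf := fun h => by rw [h, hSsf] at hu; exact nomatch hu
              exact ⟨u, by simp only [hS2def, if_neg g]; exact hu⟩
            · exact ⟨sf, by simp [hS2def]⟩
        have hSnpc : ¬ Occurs S pc := fun h => hpcC ((hSocc pc).1 h).1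
        have hS2feas : FeasibleSchedule r d t (ClairSet r d t) S₂ := by
          refine ⟨?_, ?_, ?_⟩
          · intro u hu
            have g : u ≠ sf := by omega
            simp only [hS2def, if_neg g]
            exact hS.1 u hu
          · intro a b k ha hb
            rcases hS2char a k ha with ⟨ga, rfl⟩ | ⟨ga, hSa⟩
            · rcases hS2char b k hb with ⟨gb, _⟩ | ⟨gb, hSb⟩
              · rw [ga, gb]
              · exact absurd ⟨b, hSb⟩ hSnpc
            · rcases hS2char b k hb with ⟨gb, rfl⟩ | ⟨gb, hSb⟩
              · exact absurd ⟨a, hSa⟩ hSnpc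
              · exact hS.2.1 a b k hSa hSb
          · intro u k hk
            rcases hS2char u k hk with ⟨g, rfl⟩ | ⟨g, hSu⟩
            · rw [g]
              exact ⟨Or.inl hpcPend, hpcsf⟩
            · exact hS.2.2 u k hSu
        have hW1 : schedWeight w S₂ + w j = schedWeight w C + w pc :=
          schedWeight_swap' w S₂ C j pc (Ne.symm hpcj) hjC hpcC hS2occ
        have hW2 : schedWeight w T + w pc = schedWeight w O + w j :=
          schedWeight_swap' w T O pc j hpcj hpcO hjO hTocc
        have hle1 := hC.2 S₂ hS2feas
        have hle2 := hO.2 T hT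
        have hwpc : w pc = w j := by linarith
        refine ⟨pc, hpcO, hpcC, hwpc, S₂, ?_, ?_, by linarith⟩
        · refine ⟨hS2feas.1, hS2feas.2.1, fun u k hk => ⟨?_, (hS2feas.2.2 u k hk).2⟩⟩
          rcases (hS2occ k).1 ⟨u, hk⟩ with ⟨h1, h2⟩ | rfl
          · exact Or.inl ⟨h1, h2⟩
          · exact Or.inr rfl
        · intro k hk
          rcases hk with ⟨h1, h2⟩ | h1
          · exact (hS2occ k).2 (Or.inl ⟨h1, h2⟩)
          · exact (hS2occ k).2 (Or.inr h1)
  -- initial state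
  obtain ⟨p₁, hp₁⟩ := hA tj htj1 htj2
  set S₀ : ℕ → Option P := fun s => if s = tj then none else C s with hS0def
  set T₀ : ℕ → Option P := fun s => if s = tj then some j else O s with hT0def
  have hS0char : ∀ u k, S₀ u = some k → u ≠ tj ∧ C u = some k := by
    intro u k hu
    simp only [hS0def] at hu
    by_cases g1 : u = tj
    · rw [if_pos g1] at hu; exact nomatch hu
    · rw [if_neg g1] at hu; exact ⟨g1, hu⟩
  have hT0char : ∀ u k, T₀ u = some k → (u = tj ∧ k = j) ∨ (u ≠ tj ∧ O u = some k) := by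
    intro u k hu
    simp only [hT0def] at hu
    by_cases g1 : u = tj
    · rw [if_pos g1] at hu
      exact Or.inl ⟨g1, (Option.some.inj hu).symm⟩
    · rw [if_neg g1] at hu
      exact Or.inr ⟨g1, hu⟩
  have hS0feas : FeasibleSchedule r d t (ClairSet r d t) S₀ := by
    refine ⟨?_, ?_, ?_⟩
    · intro u hu
      have g : u ≠ tj := by omega
      simp only [hS0def, if_neg g]
      exact hC.1.1 u hu
    · intro a b k ha hb
      obtain ⟨_, ha2⟩ := hS0char a k ha
      obtain ⟨_, hb2⟩ := hS0char b k hb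
      exact hC.1.2.1 a b k ha2 hb2
    · intro u k hk
      exact hC.1.2.2 u k (hS0char u k hk).2
  have hS0occ : ∀ k, Occurs S₀ k ↔ Occurs C k ∧ k ≠ j := by
    intro k
    constructor
    · rintro ⟨u, hu⟩
      obtain ⟨g1, hu2⟩ := hS0char u k hu
      refine ⟨⟨u, hu2⟩, ?_⟩
      intro hkj
      rw [hkj] at hu2
      exact g1 (hC.1.2.1 u tj j hu2 hCtj)
    · rintro ⟨⟨u, hu⟩, h2⟩
      have g1 : u ≠ tj := by
        intro h
        rw [h, hCtj] at hu
        exact h2 (Option.some.inj hu).symm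
      exact ⟨u, by simp only [hS0def, if_neg g1]; exact hu⟩
  have hT0feas : FeasibleSchedule r d t (PendingSet r d t) T₀ := by
    refine ⟨?_, ?_, ?_⟩
    · intro u hu
      have g : u ≠ tj := by omega
      simp only [hT0def, if_neg g]
      exact hO.1.1 u hu
    · intro a b k ha hb
      rcases hT0char a k ha with ⟨ga, rfl⟩ | ⟨ga, hOa⟩
      · rcases hT0char b k hb with ⟨gb, _⟩ | ⟨gb, hOb⟩
        · rw [ga, gb]
        · exact absurd hOb (hOnotj b)
      · rcases hT0char b k hb with ⟨gb, rfl⟩ | ⟨gb, hOb⟩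
        · exact absurd hOa (hOnotj a)
        · exact hO.1.2.1 a b k hOa hOb
    · intro u k hk
      rcases hT0char u k hk with ⟨g, rfl⟩ | ⟨g, hOu⟩
      · rw [g]
        exact ⟨hjpend, le_trans hjr htj1, htj2⟩
      · exact hO.1.2.2 u k hOu
  have hT0occ : ∀ k, Occurs T₀ k ↔ (Occurs O k ∧ k ≠ p₁) ∨ k = j := by
    intro k
    constructor
    · rintro ⟨u, hu⟩
      rcases hT0char u k hu with ⟨g, rfl⟩ | ⟨g, hOu⟩
      · exact Or.inr rfl
      · refine Or.inl ⟨⟨u, hOu⟩, ?_⟩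
        intro hkp
        rw [hkp] at hOu
        exact g (hO.1.2.1 u tj p₁ hOu hp₁)
    · rintro (⟨⟨u, hu⟩, h2⟩ | rfl)
      · have g1 : u ≠ tj := by
          intro h
          rw [h, hp₁] at hu
          exact h2 (Option.some.inj hu).symm
        exact ⟨u, by simp only [hT0def, if_neg g1]; exact hu⟩
      · exact ⟨tj, by simp [hT0def]⟩
  exact AUX (d j - t) ∅ tj p₁ S₀ T₀ (by simp) (by simp) (by simp) htj1 htj2
    (by simp [hS0def]) hp₁ hS0feas hS0occ hT0feas hT0occ
    (fun s _ hs => by simp only [hT0def, if_neg hs]) (by simp)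
end

section
/- Let C_t be a clairvoyant schedule that conforms with an oblivious schedule O_t. If packets i and j both occur in O_t, w_i < w_j, d_i < d_j, and i occurs in C_t, then j also occurs in C_t. -/
/-- If `C` is a clairvoyant schedule conforming with an oblivious
schedule `O`, packets `i, j` both occur in `O`, `w i < w j`, `d i < d j`, and
`i` occurs in `C`, then `j` occurs in `C`. -/
theorem stmt_3 {P : Type*} [Fintype P] (r d : P → ℕ) (w : P → ℝ)
    (le : P → P → Prop)
    (hrd : ∀ j, r j < d j) (hw : ∀ j, 0 < w j)
    (hlin : IsLinearOrder P le) (hcomp : OrderCompatible r d w le)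
    (t : ℕ) (O C : ℕ → Option P)
    (hO : ObliviousSchedule r d w le t O)
    (hC : ClairvoyantSchedule r d w t C)
    (hconf : Conforms r d w le t O C)
    (i j : P) (hiO : Occurs O i) (hjO : Occurs O j)
    (hwij : w i < w j) (hdij : d i < d j) (hiC : Occurs C i) :
    Occurs C j := by
  classical
  obtain ⟨s, hs⟩ := hiC
  by_contra hjC
  obtain ⟨⟨hCnone, hCinj, hCval⟩, hCopt⟩ := hC
  obtain ⟨⟨⟨hOnone, hOinj, hOval⟩, _⟩, _⟩ := hO
  obtain ⟨uj, huj⟩ := hjO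
  have hjp : Pending r d t j := (hOval uj j huj).1
  have hij : i ≠ j := fun h => absurd hwij (by rw [h]; exact lt_irrefl _)
  have hts : t ≤ s := by
    by_contra h
    push_neg at h
    exact absurd hs (by rw [hCnone s h]; simp)
  have hsd : s < d i := (hCval s i hs).2.2
  set C' : ℕ → Option P := fun u => if u = s then some j else C u with hC'
  have hC's : C' s = some j := by simp [hC']
  have hC'ne : ∀ u, u ≠ s → C' u = C u := fun u hu => by simp [hC', hu]
  have hfeas : FeasibleSchedule r d t (ClairSet r d t) C' := by
    refine ⟨?_, ?_, ?_⟩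
    · intro u hu
      rw [hC'ne u (by omega)]
      exact hCnone u hu
    · intro t₁ t₂ k h1 h2
      by_cases e1 : t₁ = s <;> by_cases e2 : t₂ = s
      · omega
      · exfalso
        rw [e1, hC's] at h1
        rw [hC'ne t₂ e2] at h2
        exact hjC ⟨t₂, by rw [h2, ← Option.some_inj.mp h1]⟩
      · exfalso
        rw [e2, hC's] at h2
        rw [hC'ne t₁ e1] at h1
        exact hjC ⟨t₁, by rw [h1, ← Option.some_inj.mp h2]⟩
      · rw [hC'ne t₁ e1] at h1; rw [hC'ne t₂ e2] at h2
        exact hCinj t₁ t₂ k h1 h2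
    · intro u k hk
      by_cases e : u = s
      · subst e
        rw [hC's] at hk
        have hkj : k = j := Option.some_inj.mp hk.symm
        subst hkj
        exact ⟨Or.inl hjp, le_trans hjp.1 hts, by omega⟩
      · rw [hC'ne u e] at hk
        exact hCval u k hk
  have hOccj : Occurs C' j := ⟨s, hC's⟩
  have hOcci : ¬ Occurs C' i := by
    rintro ⟨u, hu⟩
    by_cases e : u = s
    · rw [e, hC's] at hu; exact hij (Option.some_inj.mp hu).symm
    · rw [hC'ne u e] at hu
      exact e (hCinj u s i hu hs)
  have hOcck : ∀ k, k ≠ i → k ≠ j → (Occurs C' k ↔ Occurs C k) := by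
    intro k hki hkj
    constructor
    · rintro ⟨u, hu⟩
      by_cases e : u = s
      · rw [e, hC's] at hu; exact absurd (Option.some_inj.mp hu).symm hkj
      · exact ⟨u, by rwa [hC'ne u e] at hu⟩
    · rintro ⟨u, hu⟩
      refine ⟨u, ?_⟩
      have e : u ≠ s := by
        intro e; subst e
        rw [hs] at hu
        exact hki (Option.some_inj.mp hu).symm
      rwa [hC'ne u e]
  have hdiff : schedWeight w C' - schedWeight w C = w j - w i := by
    unfold schedWeight
    rw [← Finset.sum_sub_distrib]
    have hz : ∀ k ∈ (Finset.univ : Finset P), k ∉ ({i, j} : Finset P) →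
        ((if Occurs C' k then w k else 0) - (if Occurs C k then w k else 0)) = 0 := by
      intro k _ hk
      simp only [Finset.mem_insert, Finset.mem_singleton] at hk
      push_neg at hk
      simp [hOcck k hk.1 hk.2]
    rw [← Finset.sum_subset (Finset.subset_univ ({i, j} : Finset P)) hz]
    rw [Finset.sum_pair hij]
    have hCi : Occurs C i := ⟨s, hs⟩
    simp [hOccj, hOcci, hCi, hjC]
    ring
  have hle := hCopt C' hfeas
  linarith
end

section
/- Let S be a feasible schedule starting at step t whose domain is the consecutive block {t, t+1, …, t+s−1}, and let 1 ≤ l ≤ s−1. Suppose that r_{S(t+l)} ≤ t (the packet scheduled at step t+l is already released at t) and that for every 0 ≤ i < l the packet S(t+i) has slack, i.e. d_{S(t+i)} > t+i+1. Then the schedule S' defined by S'(t) = S(t+l), S'(t+i) = S(t+i−1) for 1 ≤ i ≤ l, and S'(t') = S(t') for t' > t+l, is a feasible schedule scheduling the same set of packets as S. -/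
/-- Moving a packet `S(t+l)`, already released at `t` , to the front of a
feasible schedule `S` with domain `{t, …, t+s-1}` — shifting `S(t), …, S(t+l-1)` one
step later — preserves feasibility, provided all of `S(t), …, S(t+l-1)` have slack. -/
theorem stmt_7 {P : Type*} (r d : P → ℕ)
    (hrd : ∀ j, r j < d j)
    (t s : ℕ) (A : Set P) (S : ℕ → Option P)
    (hS : FeasibleSchedule r d t A S)
    (hdom : ∀ t', (S t').isSome ↔ (t ≤ t' ∧ t' < t + s))
    (l : ℕ) (hl1 : 1 ≤ l) (hls : l ≤ s - 1)
    (hrel : ∀ j, S (t + l) = some j → r j ≤ t)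
    (hslack : ∀ i < l, ∀ j, S (t + i) = some j → t + i + 1 < d j) :
    FeasibleSchedule r d t A
      (fun t' => if t' = t then S (t + l)
        else if t < t' ∧ t' ≤ t + l then S (t' - 1) else S t') ∧
    ∀ j, Occurs
      (fun t' => if t' = t then S (t + l)
        else if t < t' ∧ t' ≤ t + l then S (t' - 1) else S t') j ↔ Occurs S j := by

  obtain ⟨h0, hinj, hfeas⟩ := hS
  set S' : ℕ → Option P := fun t' => if t' = t then S (t + l)
        else if t < t' ∧ t' ≤ t + l then S (t' - 1) else S t' with hS'
  set σ : ℕ → ℕ := fun t' => if t' = t then t + l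
        else if t < t' ∧ t' ≤ t + l then t' - 1 else t' with hσ
  have hσS : ∀ t', S' t' = S (σ t') := by
    intro t'
    simp only [hS', hσ]
    split_ifs <;> rfl
  refine ⟨⟨?_, ?_, ?_⟩, ?_⟩
  · intro t' ht'
    have hid : σ t' = t' := by
      simp only [hσ]; split_ifs <;> omega
    rw [hσS, hid]
    exact h0 t' ht'
  · intro t₁ t₂ j h₁ h₂
    rw [hσS] at h₁ h₂
    have hst : σ t₁ = σ t₂ := hinj _ _ _ h₁ h₂
    simp only [hσ] at hst
    split_ifs at hst <;> omega
  · intro t' j h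
    by_cases h1 : t' = t
    · have heq : S' t' = S (t + l) := by simp [hS', h1]
      rw [heq] at h
      obtain ⟨hjA, hr, hd⟩ := hfeas _ _ h
      have hrt := hrel j h
      exact ⟨hjA, by omega, by omega⟩
    · by_cases h2 : t < t' ∧ t' ≤ t + l
      · have heq : S' t' = S (t' - 1) := by simp [hS', h1, h2]
        rw [heq] at h
        obtain ⟨hjA, hr, hd⟩ := hfeas _ _ h
        have hi : t + (t' - 1 - t) = t' - 1 := by omega
        have hsl := hslack (t' - 1 - t) (by omega) j (by rw [hi]; exact h)
        exact ⟨hjA, by omega, by omega⟩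
      · have heq : S' t' = S t' := by simp [hS', h1, h2]
        rw [heq] at h
        exact hfeas _ _ h
  · intro j
    constructor
    · rintro ⟨u, hu⟩
      rw [hσS] at hu
      exact ⟨σ u, hu⟩
    · rintro ⟨u, hu⟩
      by_cases h1 : u = t + l
      · refine ⟨t, ?_⟩
        have hst : σ t = t + l := by simp [hσ]
        rw [hσS, hst, ← h1]
        exact hu
      · by_cases h2 : t ≤ u ∧ u < t + l
        · refine ⟨u + 1, ?_⟩
          have hst : σ (u + 1) = u := by
            simp only [hσ]; split_ifs <;> omega
          rw [hσS, hst]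
          exact hu
        · refine ⟨u, ?_⟩
          have hst : σ u = u := by
            simp only [hσ]; split_ifs <;> omega
          rw [hσS, hst]
          exact hu
end

section
/- Let C_t be a clairvoyant schedule conforming with an oblivious schedule O_t, and let h be the ⊴-minimal packet among the maximum-weight packets occurring in O_t. If C_t(t) is defined, then C_t(t) ⊴ h. -/
/-- If the clairvoyant schedule `C` conforms with the oblivious schedule
`O` and `h` is the `⊴`-minimal among the heaviest packets occurring in `O`, then
whenever `C t` is defined, `C t ⊴ h`. -/
theorem stmt_9 {P : Type*} [Fintype P] (r d : P → ℕ) (w : P → ℝ)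
    (le : P → P → Prop)
    (hrd : ∀ j, r j < d j) (hw : ∀ j, 0 < w j)
    (hlin : IsLinearOrder P le) (hcomp : OrderCompatible r d w le)
    (t : ℕ) (O C : ℕ → Option P)
    (hO : ObliviousSchedule r d w le t O)
    (hC : ClairvoyantSchedule r d w t C)
    (hconf : Conforms r d w le t O C)
    (h : P) (hhO : Occurs O h)
    (hhmax : ∀ k, Occurs O k → w k ≤ w h)
    (hhmin : ∀ k, Occurs O k → w k = w h → le h k)
    (jt : P) (hjt : C t = some jt) :
    le jt h := by
  by_contra hnot
  have htot := hlin.total h jt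
  have hle : le h jt := htot.resolve_right (fun hh => hnot hh)
  have hne : h ≠ jt := fun he => hnot (he ▸ hlin.refl h)
  have hrjt : r jt ≤ t := (hC.1.2.2 t jt hjt).2.1
  have hjtO : Occurs O jt := hconf.2.1 jt ⟨t, hjt⟩ hrjt
  have h1 : w jt ≤ w h := hhmax jt hjtO
  have h2 : w h < w jt := hconf.2.2 jt hjt h hhO hle hne
  linarith
end

section
/- For all real numbers w_e and w_h with 0 < w_e ≤ w_h, (w_e/w_h)·w_e + (1 − w_e/w_h)·(w_e + w_h) = w_h; consequently, w_h ≤ (4/3)·((w_e/w_h)·w_e + (1 − w_e/w_h)·w_h), i.e. the per-step ratio of the adversary's expected gain to RG's expected gain is at most 4/3. -/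
/-- For `0 < w_e ≤ w_h`, the adversary's expected per-step gain
`(w_e/w_h)·w_e + (1 − w_e/w_h)·(w_e + w_h)` equals `w_h`, and consequently it is
at most `4/3` times RG's expected gain `(w_e/w_h)·w_e + (1 − w_e/w_h)·w_h`. -/
theorem stmt_12 (we wh : ℝ) (hwe : 0 < we) (hweh : we ≤ wh) :
    (we / wh) * we + (1 - we / wh) * (we + wh) = wh ∧
    wh ≤ (4 / 3) * ((we / wh) * we + (1 - we / wh) * wh) := by
  have hwh : 0 < wh := lt_of_lt_of_le hwe hweh
  constructor
  · field_simp
    ring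
  · have h : (4 / 3) * ((we / wh) * we + (1 - we / wh) * wh)
        = (4 / 3) * (we * we + (wh - we) * wh) / wh := by
      field_simp
    rw [h, le_div_iff₀ hwh]
    nlinarith [sq_nonneg (2 * we - wh)]
end
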